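/- arXiv:2604.01233 — 4 statements merged into one kernel-verified Lean document; each statement's English description precedes it below -/
import Mathlib

section
/- Let δ = −V·Δ₀, δ* = ⌈δ⌉ − 1, and for K ∈ ℤ let χ(K) = (V·K + δ*) mod U ∈ {0, 1, …, U−1}. Then an integer K is skipped (i.e., K does not belong to the image of A) if and only if χ(K) ∈ {0, 1, …, κ−1}. -/
/-- Skip-day (chad) index test: with `δ = -V·Δ₀`, `δ* = ⌈δ⌉ - 1`, and
`χ(K) = (V·K + δ*) mod U`, an integer `K` is skipped (not in the image of `A`)
iff `χ(K) ∈ {0,…,κ-1}` where `κ = U - V`. -/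
theorem stmt15 (Δ₀ : ℝ) (U V : ℤ) (hV : 0 < V) (hVU : V < U) (hU2V : U < 2 * V)
    (κ : ℤ) (hκ : κ = U - V)
    (A : ℤ → ℤ) (hA : ∀ j : ℤ, A j = ⌊Δ₀ + (j : ℝ) * ((U : ℝ) / (V : ℝ))⌋)
    (δstar : ℤ) (hδstar : δstar = ⌈-(V : ℝ) * Δ₀⌉ - 1)
    (χ : ℤ → ℤ) (hχ : ∀ K : ℤ, χ K = (V * K + δstar) % U) :
    ∀ K : ℤ, K ∉ Set.range A ↔ (0 ≤ χ K ∧ χ K < κ) := by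
  intro K
  have hU : (0:ℤ) < U := hV.trans hVU
  have hVR : (0:ℝ) < (V:ℝ) := by exact_mod_cast hV
  have hVne : (V:ℝ) ≠ 0 := ne_of_gt hVR
  set m : ℤ := V * K + δstar with hm
  have hr0 : 0 ≤ m % U := Int.emod_nonneg m hU.ne'
  have hr1 : m % U < U := Int.emod_lt_of_pos m hU
  have hdiv : m % U + U * (m / U) = m := Int.emod_add_mul_ediv m U
  -- Step 1: membership in range A as an integer interval condition
  have key : K ∈ Set.range A ↔ ∃ j : ℤ, m + 1 ≤ j * U ∧ j * U ≤ m + V := by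
    constructor
    · rintro ⟨j, hj⟩
      rw [hA j] at hj
      rw [Int.floor_eq_iff] at hj
      obtain ⟨h1, h2⟩ := hj
      refine ⟨j, ?_, ?_⟩
      · -- K ≤ Δ₀ + j * (U/V)  ⇒  V*K - V*Δ₀ ≤ j*U  ⇒ ceil bound
        have hreal : ((V * K : ℤ) : ℝ) + (-(V:ℝ) * Δ₀) ≤ ((j * U : ℤ) : ℝ) := by
          push_cast
          have := mul_le_mul_of_nonneg_left h1 hVR.le
          rw [mul_add] at this
          field_simp at this ⊢
          nlinarith
        have hceil : ⌈((V * K : ℤ) : ℝ) + (-(V:ℝ) * Δ₀)⌉ ≤ j * U := Int.ceil_le.mpr hreal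
        rw [add_comm, Int.ceil_add_intCast] at hceil
        omega
      · -- Δ₀ + j*(U/V) < K+1  ⇒ j*U < V*K + V - V*Δ₀
        have hreal : ((j * U : ℤ) : ℝ) < ((V * K + V : ℤ) : ℝ) + (-(V:ℝ) * Δ₀) := by
          push_cast
          have := mul_lt_mul_of_pos_left h2 hVR
          field_simp at this ⊢
          nlinarith
        have hceil : j * U < ⌈((V * K + V : ℤ) : ℝ) + (-(V:ℝ) * Δ₀)⌉ := Int.lt_ceil.mpr hreal
        rw [add_comm, Int.ceil_add_intCast] at hceil
        omega
    · rintro ⟨j, h1, h2⟩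
      refine ⟨j, ?_⟩
      rw [hA j, Int.floor_eq_iff]
      have hc1 : ⌈((V * K : ℤ) : ℝ) + (-(V:ℝ) * Δ₀)⌉ ≤ j * U := by
        rw [add_comm, Int.ceil_add_intCast]; omega
      have hr1' : ((V * K : ℤ) : ℝ) + (-(V:ℝ) * Δ₀) ≤ ((j * U : ℤ) : ℝ) := Int.ceil_le.mp hc1
      have hc2 : j * U < ⌈((V * K + V : ℤ) : ℝ) + (-(V:ℝ) * Δ₀)⌉ := by
        rw [add_comm, Int.ceil_add_intCast]; omega
      have hr2' : ((j * U : ℤ) : ℝ) < ((V * K + V : ℤ) : ℝ) + (-(V:ℝ) * Δ₀) := Int.lt_ceil.mp hc2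
      push_cast at hr1' hr2'
      have e : (j:ℝ) * ((U:ℝ)/(V:ℝ)) * (V:ℝ) = (j:ℝ) * (U:ℝ) := by field_simp
      constructor
      · have hmul : (K:ℝ) * V ≤ (Δ₀ + (j:ℝ) * ((U:ℝ)/(V:ℝ))) * V := by nlinarith [hr1', e]
        exact le_of_mul_le_mul_right hmul hVR
      · have hmul : (Δ₀ + (j:ℝ) * ((U:ℝ)/(V:ℝ))) * V < ((K:ℝ) + 1) * V := by nlinarith [hr2', e]
        exact lt_of_mul_lt_mul_right hmul hVR.le
  -- Step 2: the interval contains a multiple of U iff m % U ≥ U - V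
  have key2 : (∃ j : ℤ, m + 1 ≤ j * U ∧ j * U ≤ m + V) ↔ U - V ≤ m % U := by
    constructor
    · rintro ⟨j, h1, h2⟩
      have hjlb : m / U < j := by
        have : (m / U) * U < j * U := by nlinarith [hdiv, hr0]
        exact lt_of_mul_lt_mul_right this hU.le
      have hjub : j < m / U + 2 := by
        have : j * U < (m / U + 2) * U := by nlinarith [hdiv, hr1]
        exact lt_of_mul_lt_mul_right this hU.le
      have hje : j = m / U + 1 := by omega
      subst hje
      nlinarith [hdiv]
    · intro h
      refine ⟨m / U + 1, ?_, ?_⟩ <;> nlinarith [hdiv, hr1]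
  rw [key, key2, hχ K, ← hm, hκ]
  omega
end

section
/- For K ∈ ℤ define J(K) = ⌈V·(K + 1 − Δ₀)/U⌉ − 1. Then: if K belongs to the image of A, one has A(J(K)) = K; and if K is skipped, one has A(J(K)) = K − 1. -/
/-- Inverse map from labels to civil days: with `J(K) = ⌈V·(K+1-Δ₀)/U⌉ - 1`,
if the label `K` occurs (is in the image of `A`) then `A(J(K)) = K`,
and if `K` is skipped then `A(J(K)) = K - 1`. -/
theorem stmt16 (Δ₀ : ℝ) (U V : ℤ) (hV : 0 < V) (hVU : V < U) (hU2V : U < 2 * V)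
    (A : ℤ → ℤ) (hA : ∀ j : ℤ, A j = ⌊Δ₀ + (j : ℝ) * ((U : ℝ) / (V : ℝ))⌋)
    (J : ℤ → ℤ)
    (hJ : ∀ K : ℤ, J K = ⌈(V : ℝ) * ((K : ℝ) + 1 - Δ₀) / (U : ℝ)⌉ - 1) :
    ∀ K : ℤ,
      (K ∈ Set.range A → A (J K) = K) ∧
      (K ∉ Set.range A → A (J K) = K - 1) := by
  have hV' : (0:ℝ) < (V:ℝ) := by exact_mod_cast hV
  have hU' : (0:ℝ) < (U:ℝ) := by exact_mod_cast hV.trans hVU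
  have hq : (0:ℝ) < (U:ℝ)/(V:ℝ) := div_pos hU' hV'
  have hq2 : (U:ℝ)/(V:ℝ) < 2 := by
    rw [div_lt_iff₀ hV']
    have : (U:ℝ) < 2*(V:ℝ) := by exact_mod_cast hU2V
    linarith
  intro K
  set x : ℝ := (V : ℝ) * ((K : ℝ) + 1 - Δ₀) / (U : ℝ) with hxdef
  have key : ∀ j : ℤ, ((j:ℝ) < x ↔ Δ₀ + (j:ℝ) * ((U:ℝ)/(V:ℝ)) < (K:ℝ) + 1) := by
    intro j
    rw [hxdef, lt_div_iff₀ hU',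
      show Δ₀ + (j:ℝ) * ((U:ℝ)/(V:ℝ)) = Δ₀ + ((j:ℝ)*(U:ℝ))/(V:ℝ) by ring,
      ← lt_sub_iff_add_lt', div_lt_iff₀ hV']
    constructor <;> intro h <;> nlinarith
  have hJK : J K = ⌈x⌉ - 1 := hJ K
  -- A (J K) ≤ K
  have h1 : A (J K) ≤ K := by
    rw [hA]
    have hlt : ((J K : ℝ)) < x := by
      rw [hJK]; push_cast
      have := Int.ceil_lt_add_one x
      linarith
    have := (key (J K)).mp hlt
    have : Δ₀ + (J K : ℝ) * ((U:ℝ)/(V:ℝ)) < ((K+1 : ℤ) : ℝ) := by push_cast; linarith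
    have := Int.floor_lt.mpr this
    omega
  -- K + 1 ≤ A (J K + 1)
  have h2 : K + 1 ≤ A (J K + 1) := by
    rw [hA]
    have hge : x ≤ ((J K + 1 : ℤ) : ℝ) := by
      rw [hJK]; push_cast
      have := Int.le_ceil x
      linarith
    have hnot : ¬ ((J K + 1 : ℤ) : ℝ) < x := not_lt.mpr hge
    have := (key (J K + 1)).not.mp hnot
    have hle : ((K:ℝ) + 1) ≤ Δ₀ + ((J K + 1 : ℤ):ℝ) * ((U:ℝ)/(V:ℝ)) := by
      push_cast at this ⊢; linarith
    have : ((K + 1 : ℤ):ℝ) ≤ Δ₀ + ((J K + 1 : ℤ):ℝ) * ((U:ℝ)/(V:ℝ)) := by push_cast at hle ⊢; linarith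
    exact Int.le_floor.mpr this
  -- step bound: A (J K + 1) ≤ A (J K) + 2
  have h3 : A (J K + 1) ≤ A (J K) + 2 := by
    rw [hA, hA]
    have hle : Δ₀ + ((J K + 1 : ℤ):ℝ) * ((U:ℝ)/(V:ℝ))
        ≤ (Δ₀ + (J K : ℝ) * ((U:ℝ)/(V:ℝ))) + (2:ℤ) := by
      push_cast; nlinarith
    calc ⌊Δ₀ + ((J K + 1 : ℤ):ℝ) * ((U:ℝ)/(V:ℝ))⌋
        ≤ ⌊(Δ₀ + (J K : ℝ) * ((U:ℝ)/(V:ℝ))) + (2:ℤ)⌋ := Int.floor_le_floor hle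
      _ = ⌊Δ₀ + (J K : ℝ) * ((U:ℝ)/(V:ℝ))⌋ + 2 := Int.floor_add_intCast _ _
  constructor
  · rintro ⟨j₀, hj₀⟩
    -- j₀ ≤ J K
    have hy : Δ₀ + (j₀:ℝ) * ((U:ℝ)/(V:ℝ)) < (K:ℝ) + 1 := by
      have hfl : ⌊Δ₀ + (j₀:ℝ) * ((U:ℝ)/(V:ℝ))⌋ = K := by rw [← hA]; exact hj₀
      have := Int.lt_floor_add_one (Δ₀ + (j₀:ℝ) * ((U:ℝ)/(V:ℝ)))
      rw [hfl] at this; push_cast at this; linarith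
    have hj₀lt : (j₀:ℝ) < x := (key j₀).mpr hy
    have hj₀le : j₀ ≤ J K := by
      have := Int.lt_ceil.mpr hj₀lt
      omega
    have hmono : A j₀ ≤ A (J K) := by
      rw [hA, hA]
      apply Int.floor_le_floor
      have : (j₀:ℝ) ≤ (J K : ℝ) := by exact_mod_cast hj₀le
      nlinarith
    omega
  · intro hK
    have hne : A (J K) ≠ K := fun h => hK ⟨J K, h⟩
    omega
end

section
/- For every integer L ≥ 1 and every K ∈ ℤ, the number of skipped integers among {K, K+1, …, K+L−1} equals either ⌊L·κ/U⌋ or ⌈L·κ/U⌉. In particular, if 30·κ < U, then every block of 30 consecutive integers contains at most one skipped integer; consequently, when a month is linearized by the 30 labels 30n, 30n+1, …, 30n+29, the month length is always 30 civil days (no skip) or 29 civil days (one skip). -/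
theorem ceil_sub_ceil_aux (x t : ℝ) :
    ⌈x⌉ - ⌈x - t⌉ = ⌊t⌋ ∨ ⌈x⌉ - ⌈x - t⌉ = ⌈t⌉ := by
  have h1 : ⌈x - t⌉ + ⌊t⌋ ≤ ⌈x⌉ := by
    rw [← Int.ceil_add_intCast]
    exact Int.ceil_le_ceil (by linarith [Int.floor_le t])
  have h2 : ⌈x⌉ ≤ ⌈x - t⌉ + ⌈t⌉ := by
    rw [← Int.ceil_add_intCast]
    exact Int.ceil_le_ceil (by linarith [Int.le_ceil t])
  have h3 : ⌈t⌉ ≤ ⌊t⌋ + 1 := Int.ceil_le_floor_add_one t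
  omega

/-- Skip counts in blocks: for every `L ≥ 1` and `K`, the number of skipped labels in
`{K, …, K+L-1}` equals `⌊L·κ/U⌋` or `⌈L·κ/U⌉`. In particular, if `30·κ < U` then every
block of 30 consecutive labels contains at most one skipped label, and every month of
30 labels `30n, …, 30n+29` has exactly 30 (no skip) or 29 (one skip) civil days. -/
theorem stmt17 (Δ₀ : ℝ) (U V : ℤ) (hV : 0 < V) (hVU : V < U) (hU2V : U < 2 * V)
    (κ : ℤ) (hκ : κ = U - V)
    (A : ℤ → ℤ) (hA : ∀ j : ℤ, A j = ⌊Δ₀ + (j : ℝ) * ((U : ℝ) / (V : ℝ))⌋) :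
    (∀ L : ℕ, 1 ≤ L → ∀ K : ℤ,
      (({m : ℤ | K ≤ m ∧ m < K + (L : ℤ) ∧ m ∉ Set.range A}.ncard : ℤ)
          = ⌊(L : ℝ) * (κ : ℝ) / (U : ℝ)⌋ ∨
        ({m : ℤ | K ≤ m ∧ m < K + (L : ℤ) ∧ m ∉ Set.range A}.ncard : ℤ)
          = ⌈(L : ℝ) * (κ : ℝ) / (U : ℝ)⌉)) ∧
    (30 * κ < U →
      (∀ K : ℤ, {m : ℤ | K ≤ m ∧ m < K + 30 ∧ m ∉ Set.range A}.ncard ≤ 1) ∧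
      (∀ n : ℤ,
        {m : ℤ | 30 * n ≤ m ∧ m < 30 * n + 30 ∧ m ∈ Set.range A}.ncard = 30 ∨
        {m : ℤ | 30 * n ≤ m ∧ m < 30 * n + 30 ∧ m ∈ Set.range A}.ncard = 29)) := by
  classical
  have hV0 : (0:ℝ) < V := by exact_mod_cast hV
  have hU0 : (0:ℝ) < U := by exact_mod_cast hV.trans hVU
  have hκ0 : (0:ℤ) < κ := by omega
  -- characterization of when K ≤ A j
  have hchar : ∀ (K j : ℤ), K ≤ A j ↔ ⌈((K:ℝ) - Δ₀) * V / U⌉ ≤ j := by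
    intro K j
    rw [hA j, Int.le_floor, Int.ceil_le, div_le_iff₀ hU0]
    constructor
    · intro h
      refine (le_div_iff₀ hV0).mp ?_
      rw [mul_div_assoc]
      linarith
    · intro h
      have h2 : (K:ℝ) - Δ₀ ≤ (j:ℝ) * U / V := (le_div_iff₀ hV0).mpr h
      rw [mul_div_assoc] at h2
      linarith
  -- A is strictly monotone
  have hmono : StrictMono A := by
    apply strictMono_int_of_lt_succ
    intro j
    rw [hA j, hA (j+1)]
    have hr : (1:ℝ) < (U:ℝ)/V := (one_lt_div hV0).mpr (by exact_mod_cast hVU)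
    have h1 : Δ₀ + (j:ℝ) * (U/V) + 1 ≤ Δ₀ + ((j:ℤ)+1 : ℤ) * ((U:ℝ)/V) := by
      push_cast
      nlinarith
    calc ⌊Δ₀ + (j:ℝ)*((U:ℝ)/V)⌋ < ⌊Δ₀ + (j:ℝ)*((U:ℝ)/V)⌋ + 1 := lt_add_one _
    _ = ⌊Δ₀ + (j:ℝ)*((U:ℝ)/V) + 1⌋ := by rw [Int.floor_add_one]
    _ ≤ ⌊Δ₀ + (((j:ℤ)+1 : ℤ):ℝ)*((U:ℝ)/V)⌋ := Int.floor_le_floor (by push_cast at h1 ⊢; linarith)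
  -- the image finset identity
  have himg : ∀ K M : ℤ,
      (Finset.Ico (⌈((K:ℝ) - Δ₀) * V / U⌉) (⌈((M:ℝ) - Δ₀) * V / U⌉)).image A
      = (Finset.Ico K M).filter (fun m => m ∈ Set.range A) := by
    intro K M
    ext m
    simp only [Finset.mem_image, Finset.mem_filter, Finset.mem_Ico, Set.mem_range]
    constructor
    · rintro ⟨j, ⟨hj1, hj2⟩, rfl⟩
      refine ⟨⟨(hchar K j).mpr hj1, ?_⟩, ⟨j, rfl⟩⟩
      by_contra h
      push_neg at h
      exact absurd ((hchar M j).mp h) (by omega)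
    · rintro ⟨⟨h1, h2⟩, j, rfl⟩
      refine ⟨j, ⟨(hchar K j).mp h1, ?_⟩, rfl⟩
      by_contra h
      push_neg at h
      exact absurd ((hchar M j).mpr h) (by omega)
  -- monotonicity of the ceil index
  have hjmono : ∀ K M : ℤ, K ≤ M → ⌈((K:ℝ) - Δ₀) * V / U⌉ ≤ ⌈((M:ℝ) - Δ₀) * V / U⌉ := by
    intro K M hKM
    have hKM' : (K:ℝ) ≤ (M:ℝ) := by exact_mod_cast hKM
    apply Int.ceil_le_ceil
    exact (div_le_div_iff_of_pos_right hU0).mpr (by nlinarith)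
  -- key counting identity
  have hkey : ∀ K M : ℤ, K ≤ M →
      ((((Finset.Ico K M).filter (fun m => m ∉ Set.range A)).card : ℤ))
        = (M - K) - (⌈((M:ℝ) - Δ₀) * V / U⌉ - ⌈((K:ℝ) - Δ₀) * V / U⌉) := by
    intro K M hKM
    have h1 : ((Finset.Ico K M).filter (fun m => m ∈ Set.range A)).card
        = (⌈((M:ℝ) - Δ₀) * V / U⌉ - ⌈((K:ℝ) - Δ₀) * V / U⌉).toNat := by
      rw [← himg K M, Finset.card_image_of_injective _ hmono.injective, Int.card_Ico]
    have h2 : ((Finset.Ico K M).filter (fun m => m ∈ Set.range A)).card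
        + ((Finset.Ico K M).filter (fun m => m ∉ Set.range A)).card
        = (Finset.Ico K M).card := by
      exact Finset.card_filter_add_card_filter_not
        (s := Finset.Ico K M) (p := fun m => m ∈ Set.range A)
    rw [Int.card_Ico] at h2
    have h3 := hjmono K M hKM
    omega
  -- the generic block count result
  have main : ∀ L : ℕ, 1 ≤ L → ∀ K : ℤ,
      (({m : ℤ | K ≤ m ∧ m < K + (L : ℤ) ∧ m ∉ Set.range A}.ncard : ℤ)
          = ⌊(L : ℝ) * (κ : ℝ) / (U : ℝ)⌋ ∨
        ({m : ℤ | K ≤ m ∧ m < K + (L : ℤ) ∧ m ∉ Set.range A}.ncard : ℤ)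
          = ⌈(L : ℝ) * (κ : ℝ) / (U : ℝ)⌉) := by
    intro L _ K
    have hset : {m : ℤ | K ≤ m ∧ m < K + (L:ℤ) ∧ m ∉ Set.range A}
        = ↑((Finset.Ico K (K + (L:ℤ))).filter (fun m => m ∉ Set.range A)) := by
      ext m
      simp [Finset.mem_Ico, and_assoc]
    rw [hset, Set.ncard_coe_finset]
    rw [hkey K (K + (L:ℤ)) (by omega)]
    have harg : (((K + (L:ℤ) : ℤ):ℝ) - Δ₀) * V / U
        = ((((K:ℝ) - Δ₀) * V / U) - (L:ℝ) * (κ:ℝ) / U) + ((L:ℤ) : ℝ) := by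
      have hVκ : (V:ℝ) = (U:ℝ) - (κ:ℝ) := by
        have : (κ:ℝ) = (U:ℝ) - (V:ℝ) := by exact_mod_cast congrArg (Int.cast : ℤ → ℝ) hκ
        linarith
      rw [hVκ]
      field_simp
      push_cast
      ring
    have hceil : ⌈(((K + (L:ℤ) : ℤ):ℝ) - Δ₀) * V / U⌉
        = ⌈(((K:ℝ) - Δ₀) * V / U) - (L:ℝ) * (κ:ℝ) / U⌉ + (L:ℤ) := by
      rw [harg, Int.ceil_add_intCast]
    rw [hceil]
    rcases ceil_sub_ceil_aux (((K:ℝ) - Δ₀) * V / U) ((L:ℝ) * (κ:ℝ) / U) with h | h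
    · left; omega
    · right; omega
  refine ⟨main, fun h30 => ?_⟩
  have hout : ∀ K : ℤ, {m : ℤ | K ≤ m ∧ m < K + 30 ∧ m ∉ Set.range A}.ncard ≤ 1 := by
    intro K
    have hm := main 30 (by norm_num) K
    push_cast at hm
    have hfl : ⌊(30:ℝ) * (κ:ℝ) / U⌋ = 0 := by
      rw [Int.floor_eq_zero_iff]
      constructor
      · positivity
      · rw [div_lt_one hU0]
        exact_mod_cast h30
    have hcl : ⌈(30:ℝ) * (κ:ℝ) / U⌉ ≤ 1 := by
      rw [Int.ceil_le]
      push_cast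
      rw [div_le_one hU0]
      exact_mod_cast h30.le
    omega
  refine ⟨hout, fun n => ?_⟩
  have hsetin : {m : ℤ | 30*n ≤ m ∧ m < 30*n + 30 ∧ m ∈ Set.range A}
      = ↑((Finset.Ico (30*n) (30*n + 30)).filter (fun m => m ∈ Set.range A)) := by
    ext m; simp [Finset.mem_Ico, and_assoc]
  have hsetout : {m : ℤ | 30*n ≤ m ∧ m < 30*n + 30 ∧ m ∉ Set.range A}
      = ↑((Finset.Ico (30*n) (30*n + 30)).filter (fun m => m ∉ Set.range A)) := by
    ext m; simp [Finset.mem_Ico, and_assoc]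
  have h2 : ((Finset.Ico (30*n) (30*n+30)).filter (fun m => m ∈ Set.range A)).card
      + ((Finset.Ico (30*n) (30*n+30)).filter (fun m => m ∉ Set.range A)).card
      = (Finset.Ico (30*n) (30*n+30)).card := by
    exact Finset.card_filter_add_card_filter_not
      (s := Finset.Ico (30*n) (30*n+30)) (p := fun m => m ∈ Set.range A)
  rw [Int.card_Ico] at h2
  have h3 := hout (30*n)
  rw [hsetout, Set.ncard_coe_finset] at h3
  rw [hsetin, Set.ncard_coe_finset]
  omega
end

section
/- Assume additionally 30·κ < U. Fix n ∈ ℤ and set r_n = χ(30n). Then for every d ∈ {1, …, 30}, χ(30n + d − 1) ≡ r_n − (d−1)·κ (mod U). Moreover: if r_n < 30·κ, then there is exactly one d ∈ {1, …, 30} for which the label 30n + d − 1 is skipped, namely d = ⌊r_n/κ⌋ + 1; and if r_n ≥ 30·κ, then none of the labels 30n, 30n+1, …, 30n+29 is skipped. -/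
/-- In-month skip location: assume `30·κ < U`, fix `n` and set `r_n = χ(30n)`. Then for
`d ∈ {1,…,30}` one has `χ(30n+d-1) ≡ r_n - (d-1)·κ (mod U)`; if `r_n < 30·κ` then exactly
one `d ∈ {1,…,30}` gives a skipped label `30n+d-1`, namely `d = ⌊r_n/κ⌋ + 1`; and if
`r_n ≥ 30·κ` then none of the labels `30n,…,30n+29` is skipped. -/
theorem stmt18 (Δ₀ : ℝ) (U V : ℤ) (hV : 0 < V) (hVU : V < U) (hU2V : U < 2 * V)
    (κ : ℤ) (hκ : κ = U - V) (h30 : 30 * κ < U)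
    (A : ℤ → ℤ) (hA : ∀ j : ℤ, A j = ⌊Δ₀ + (j : ℝ) * ((U : ℝ) / (V : ℝ))⌋)
    (δstar : ℤ) (hδstar : δstar = ⌈-(V : ℝ) * Δ₀⌉ - 1)
    (χ : ℤ → ℤ) (hχ : ∀ K : ℤ, χ K = (V * K + δstar) % U)
    (n : ℤ) :
    (∀ d : ℤ, 1 ≤ d → d ≤ 30 →
      χ (30 * n + d - 1) ≡ χ (30 * n) - (d - 1) * κ [ZMOD U]) ∧
    (χ (30 * n) < 30 * κ →
      ∀ d : ℤ, 1 ≤ d → d ≤ 30 →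
        ((30 * n + d - 1) ∉ Set.range A ↔ d = χ (30 * n) / κ + 1)) ∧
    (30 * κ ≤ χ (30 * n) →
      ∀ d : ℤ, 1 ≤ d → d ≤ 30 → (30 * n + d - 1) ∈ Set.range A) := by
  have hκpos : 0 < κ := by omega
  have hUpos : 0 < U := by omega
  have hVR : (0:ℝ) < (V:ℝ) := by exact_mod_cast hV
  -- Key lemma: K is in the range of A iff κ ≤ χ K.
  have hrange : ∀ K : ℤ, (K ∈ Set.range A ↔ κ ≤ χ K) := by
    intro K
    set c : ℤ := V * K + δstar + 1 with hc
    have hceil : c = ⌈(V:ℝ) * (K:ℝ) - (V:ℝ) * Δ₀⌉ := by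
      have he : (V:ℝ) * (K:ℝ) - (V:ℝ) * Δ₀ = (-(V:ℝ) * Δ₀) + ((V*K : ℤ) : ℝ) := by
        push_cast; ring
      rw [he, Int.ceil_add_intCast, hc, hδstar]; ring
    -- membership in range A as an integer condition
    have hmem : K ∈ Set.range A ↔ ∃ j : ℤ, c ≤ j * U ∧ j * U < c + V := by
      constructor
      · rintro ⟨j, hj⟩
        rw [hA j, Int.floor_eq_iff] at hj
        obtain ⟨h1, h2⟩ := hj
        refine ⟨j, ?_, ?_⟩
        · rw [hceil, Int.ceil_le]
          push_cast
          have hUV : (j:ℝ) * ((U:ℝ)/(V:ℝ)) * (V:ℝ) = (j:ℝ) * (U:ℝ) := by field_simp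
          have h3 := mul_le_mul_of_nonneg_right h1 hVR.le
          nlinarith [h3, hUV]
        · have h4 : j * U - V < c := by
            rw [hceil, Int.lt_ceil]
            push_cast
            have hUV : (j:ℝ) * ((U:ℝ)/(V:ℝ)) * (V:ℝ) = (j:ℝ) * (U:ℝ) := by field_simp
            have h3 := mul_lt_mul_of_pos_right h2 hVR
            nlinarith [h3, hUV]
          linarith
      · rintro ⟨j, hj1, hj2⟩
        refine ⟨j, ?_⟩
        rw [hA j, Int.floor_eq_iff]
        have hUV : (j:ℝ) * ((U:ℝ)/(V:ℝ)) * (V:ℝ) = (j:ℝ) * (U:ℝ) := by field_simp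
        constructor
        · have h1 : ((V:ℝ) * (K:ℝ) - (V:ℝ) * Δ₀) ≤ ((j*U : ℤ):ℝ) := by
            refine le_trans (Int.le_ceil _) ?_
            rw [← hceil]; exact_mod_cast hj1
          push_cast at h1
          have h2 : (V:ℝ) * (K:ℝ) ≤ (V:ℝ) * (Δ₀ + (j:ℝ) * ((U:ℝ)/(V:ℝ))) := by
            nlinarith [h1, hUV]
          exact le_of_mul_le_mul_left h2 hVR
        · have h1 : ((j*U - V : ℤ):ℝ) < (V:ℝ) * (K:ℝ) - (V:ℝ) * Δ₀ := by
            rw [← Int.lt_ceil, ← hceil]; linarith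
          push_cast at h1
          have h2 : (V:ℝ) * (Δ₀ + (j:ℝ) * ((U:ℝ)/(V:ℝ))) < (V:ℝ) * ((K:ℝ) + 1) := by
            nlinarith [h1, hUV]
          have h3 := lt_of_mul_lt_mul_left h2 hVR.le
          push_cast
          linarith
    -- the integer condition in terms of c % U
    have hde := Int.mul_ediv_add_emod c U
    have hem0 : 0 ≤ c % U := Int.emod_nonneg c (by omega)
    have hem1 : c % U < U := Int.emod_lt_of_pos c hUpos
    have hmod : (∃ j : ℤ, c ≤ j * U ∧ j * U < c + V) ↔ (c % U = 0 ∨ κ < c % U) := by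
      constructor
      · rintro ⟨j, hj1, hj2⟩
        by_contra hcon
        push_neg at hcon
        obtain ⟨hc0, hcκ⟩ := hcon
        have hc1 : 1 ≤ c % U := lt_of_le_of_ne hem0 (Ne.symm hc0)
        have hjU : j * U = U * j := mul_comm j U
        have h1 : U * (c / U) < U * j := by linarith
        have hq : c / U < j := lt_of_mul_lt_mul_left h1 hUpos.le
        have hq' : c / U + 1 ≤ j := Int.add_one_le_iff.mpr hq
        have h2 : (c / U + 1) * U ≤ j * U := mul_le_mul_of_nonneg_right hq' hUpos.le
        have h3 : (c / U + 1) * U = U * (c / U) + U := by ring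
        linarith
      · rintro (h0 | hκlt)
        · refine ⟨c / U, ?_, ?_⟩ <;>
          · have h3 : (c / U) * U = U * (c / U) := mul_comm _ _
            linarith
        · refine ⟨c / U + 1, ?_, ?_⟩ <;>
          · have h3 : (c / U + 1) * U = U * (c / U) + U := by ring
            linarith
    -- χ K in terms of c % U
    have hχc : χ K = (c - 1) % U := by
      rw [hχ]; congr 1; rw [hc]; ring
    have hsub : (c - 1) % U = (c % U - 1) % U := by
      have h7 : (c - 1) % U = ((c % U - 1) + U * (c / U)) % U := by
        congr 1; linarith
      rw [h7, Int.add_mul_emod_self_left]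
    have hχval : (c % U = 0 → χ K = U - 1) ∧ (1 ≤ c % U → χ K = c % U - 1) := by
      constructor
      · intro h0
        have h5 : ((0:ℤ) - 1 + U * 1) % U = ((0:ℤ) - 1) % U := Int.add_mul_emod_self_left _ _ _
        have h6 : ((0:ℤ) - 1 + U * 1) = U - 1 := by ring
        rw [hχc, hsub, h0, ← h5, h6, Int.emod_eq_of_lt (by omega) (by omega)]
      · intro h1
        rw [hχc, hsub, Int.emod_eq_of_lt (by linarith) (by linarith)]
    obtain ⟨hv0, hv1⟩ := hχval
    rw [hmem, hmod]
    constructor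
    · rintro (h0 | hκlt)
      · rw [hv0 h0]; omega
      · rw [hv1 (by linarith)]; linarith
    · intro hκχ
      by_cases h0 : c % U = 0
      · exact Or.inl h0
      · right
        have hc1 : 1 ≤ c % U := lt_of_le_of_ne hem0 (Ne.symm h0)
        rw [hv1 hc1] at hκχ; linarith
  -- basic bounds on χ
  have hχb : ∀ K : ℤ, 0 ≤ χ K ∧ χ K < U := by
    intro K; rw [hχ]
    exact ⟨Int.emod_nonneg _ (by omega), Int.emod_lt_of_pos _ hUpos⟩
  set r := χ (30 * n) with hrdef
  -- the congruence / shift formula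
  have hshift : ∀ d : ℤ, χ (30 * n + d - 1) = (r - (d - 1) * κ) % U := by
    intro d
    have hmodeq : (V * (30 * n + d - 1) + δstar) ≡ (r - (d - 1) * κ) [ZMOD U] := by
      have e1 : V * (30 * n + d - 1) + δstar
          = (V * (30 * n) + δstar) + (d - 1) * V := by ring
      have h1 : (V * (30 * n) + δstar) ≡ r [ZMOD U] := by
        rw [hrdef, hχ]
        exact (Int.emod_emod_of_dvd _ dvd_rfl).symm
      have h2 : (d - 1) * V ≡ (d - 1) * (-κ) [ZMOD U] := by
        refine Int.ModEq.mul_left _ ?_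
        rw [Int.modEq_iff_dvd]
        exact ⟨-1, by omega⟩
      calc V * (30 * n + d - 1) + δstar
          = (V * (30 * n) + δstar) + (d - 1) * V := e1
        _ ≡ r + (d - 1) * (-κ) [ZMOD U] := Int.ModEq.add h1 h2
        _ = r - (d - 1) * κ := by ring
    rw [hχ]
    calc (V * (30 * n + d - 1) + δstar) % U
        = (r - (d - 1) * κ) % U % U := by
          rw [← hmodeq]; exact (Int.emod_emod_of_dvd _ dvd_rfl).symm
      _ = (r - (d - 1) * κ) % U := Int.emod_emod_of_dvd _ dvd_rfl
  obtain ⟨hr0, hrU⟩ := hχb (30 * n)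
  rw [← hrdef] at hr0 hrU
  refine ⟨?_, ?_, ?_⟩
  · -- congruence part
    intro d _ _
    show χ (30 * n + d - 1) % U = (r - (d - 1) * κ) % U
    rw [hshift d]
    exact Int.emod_emod_of_dvd _ dvd_rfl
  · -- r < 30κ : unique skip
    intro hr30 d hd1 hd30
    rw [hrange, not_le, hshift d]
    have hdm1 : (d - 1) * κ ≤ 29 * κ := mul_le_mul_of_nonneg_right (by omega) hκpos.le
    have hdm0 : 0 ≤ (d - 1) * κ := mul_nonneg (by omega) hκpos.le
    have hq1 : d - 1 ≤ r / κ ↔ (d - 1) * κ ≤ r := Int.le_ediv_iff_mul_le hκpos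
    have hq2 : r / κ < d ↔ r < d * κ := Int.ediv_lt_iff_lt_mul hκpos
    have hq3 : r / κ < d - 1 ↔ r < (d - 1) * κ := Int.ediv_lt_iff_lt_mul hκpos
    have hdd : d * κ = (d - 1) * κ + κ := by ring
    obtain ⟨q, hqdef⟩ : ∃ q : ℤ, r / κ = q := ⟨_, rfl⟩
    rw [hqdef] at hq1 hq2 hq3 ⊢
    by_cases hcase : (d - 1) * κ ≤ r
    · rw [Int.emod_eq_of_lt (by linarith) (by linarith)]
      constructor
      · intro h
        have h1 : r < d * κ := by linarith
        have h2 := hq2.mpr h1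
        have h3 := hq1.mpr hcase
        omega
      · intro h
        have h1 : q < d := by omega
        have h2 := hq2.mp h1
        linarith
    · push_neg at hcase
      have he : (r - (d - 1) * κ) % U = (r - (d - 1) * κ + U) % U := by
        conv_rhs => rw [show r - (d - 1) * κ + U = (r - (d - 1) * κ) + U * 1 by ring]
        rw [Int.add_mul_emod_self_left]
      rw [he, Int.emod_eq_of_lt (by linarith) (by linarith)]
      constructor
      · intro h; exfalso; linarith
      · intro h; exfalso
        have h1 := hq3.mpr hcase
        omega
  · -- r ≥ 30κ : no skips
    intro hr30 d hd1 hd30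
    rw [hrange, hshift d]
    have hdm1 : (d - 1) * κ ≤ 29 * κ := mul_le_mul_of_nonneg_right (by omega) hκpos.le
    have hdm0 : 0 ≤ (d - 1) * κ := mul_nonneg (by omega) hκpos.le
    rw [Int.emod_eq_of_lt (by linarith) (by linarith)]
    linarith
end
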